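/- Let ω ∈ ℝ^d, let c = rank I_ω, and let (p_1,q_1),…,(p_c,q_c) ∈ I_ω be ℤ-linearly independent. Suppose x : ℤ^d → ℝ is a Birkhoff configuration with rotation vector ω satisfying τ_{p_j,q_j}x = x for all j = 1,…,c. Then x is maximally periodic: τ_{k,l}x = x for every (k,l) ∈ ℤ^d × ℤ with ⟨ω,k⟩ + l = 0. -/

import Mathlib

open scoped BigOperators

/-- The shift operator `(τ_{k,l} x)_i = x_{i+k} + l`. -/
def tau {d : ℕ} (k : Fin d → ℤ) (l : ℤ) (x : (Fin d → ℤ) → ℝ) : (Fin d → ℤ) → ℝ :=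
  fun i => x (i + k) + l

/-- A configuration is Birkhoff if every integer shift is pointwise comparable to it. -/
def IsBirkhoff {d : ℕ} (x : (Fin d → ℤ) → ℝ) : Prop :=
  ∀ (k : Fin d → ℤ) (l : ℤ), tau k l x ≤ x ∨ x ≤ tau k l x

/-- `x` has rotation vector `ω` : `lim_{n→∞} x_{ni}/n = ⟨ω,i⟩` for all `i`. -/
def HasRotVec {d : ℕ} (x : (Fin d → ℤ) → ℝ) (ω : Fin d → ℝ) : Prop :=
  ∀ i : Fin d → ℤ, Filter.Tendsto (fun n : ℕ => x ((n : ℤ) • i) / n) Filter.atTop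
    (nhds (∑ k, ω k * (i k : ℝ)))



/-- The lattice `I_ω = {(k,l) ∈ ℤ^d × ℤ : ⟨ω,k⟩ + l = 0}`, as a `ℤ`-submodule of `ℤ^d × ℤ`. -/
def Iomega {d : ℕ} (ω : Fin d → ℝ) : Submodule ℤ ((Fin d → ℤ) × ℤ) where
  carrier := {p | (∑ k, ω k * (p.1 k : ℝ)) + (p.2 : ℝ) = 0}
  zero_mem' := by simp
  add_mem' := by
    intro a b ha hb
    simp only [Set.mem_setOf_eq] at *
    have : (∑ k, ω k * (((a.1 + b.1) k : ℤ) : ℝ)) =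
        (∑ k, ω k * (a.1 k : ℝ)) + (∑ k, ω k * (b.1 k : ℝ)) := by
      rw [← Finset.sum_add_distrib]
      refine Finset.sum_congr rfl fun k _ => ?_
      push_cast [Pi.add_apply]
      ring
    simp only [Prod.fst_add, Prod.snd_add] at *
    push_cast
    push_cast at this
    linarith [ha, hb]
  smul_mem' := by
    intro c a ha
    simp only [Set.mem_setOf_eq] at *
    have : (∑ k, ω k * (((c • a.1) k : ℤ) : ℝ)) = (c : ℝ) * ∑ k, ω k * (a.1 k : ℝ) := by
      rw [Finset.mul_sum]
      refine Finset.sum_congr rfl fun k _ => ?_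
      push_cast [Pi.smul_apply, smul_eq_mul]
      ring
    simp only [Prod.smul_fst, Prod.smul_snd, smul_eq_mul] at *
    push_cast
    push_cast at this
    rw [this, ← mul_add, ha, mul_zero]



lemma tau_add' {d : ℕ} (a b : (Fin d → ℤ) × ℤ) (x : (Fin d → ℤ) → ℝ) :
    tau (a.1 + b.1) (a.2 + b.2) x = tau a.1 a.2 (tau b.1 b.2 x) := by
  funext i
  simp only [tau, add_assoc]
  push_cast
  ring

lemma tau_zero' {d : ℕ} (x : (Fin d → ℤ) → ℝ) : tau (0 : Fin d → ℤ) 0 x = x := by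
  funext i; simp [tau]

lemma tau_mono {d : ℕ} (k : Fin d → ℤ) (l : ℤ) {x y : (Fin d → ℤ) → ℝ} (h : x ≤ y) :
    tau k l x ≤ tau k l y := by
  intro i
  simp only [tau]
  exact add_le_add_left (h _) _

/-- The set of `(k,l)` with `τ_{k,l} x = x` is an additive subgroup. -/
def perSubgroup {d : ℕ} (x : (Fin d → ℤ) → ℝ) : AddSubgroup ((Fin d → ℤ) × ℤ) where
  carrier := {v | tau v.1 v.2 x = x}
  zero_mem' := tau_zero' x
  add_mem' := by
    intro a b ha hb
    show tau (a + b).1 (a + b).2 x = x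
    rw [Prod.fst_add, Prod.snd_add, tau_add' a b, hb, ha]
  neg_mem' := by
    intro a ha
    show tau (-a).1 (-a).2 x = x
    have : tau (-a).1 (-a).2 (tau a.1 a.2 x) = x := by
      rw [← tau_add' (-a) a]
      simp [tau_zero']
    rw [ha] at this
    exact this

theorem stmt6 {d : ℕ} (ω : Fin d → ℝ) (c : ℕ) (hc : Module.finrank ℤ (Iomega ω) = c)
    (p : Fin c → Fin d → ℤ) (q : Fin c → ℤ)
    (hmem : ∀ j, ((p j, q j) : (Fin d → ℤ) × ℤ) ∈ Iomega ω)
    (hind : LinearIndependent ℤ (fun j => ((p j, q j) : (Fin d → ℤ) × ℤ)))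
    (x : (Fin d → ℤ) → ℝ) (hB : IsBirkhoff x) (hrot : HasRotVec x ω)
    (hper : ∀ j, tau (p j) (q j) x = x) :
    ∀ (k : Fin d → ℤ) (l : ℤ), (∑ m, ω m * (k m : ℝ)) + (l : ℝ) = 0 → tau k l x = x := by
  -- auxiliary: Iomega ω is a finite ℤ-module
  intro k l hkl
  have hv : ((k, l) : (Fin d → ℤ) × ℤ) ∈ Iomega ω := hkl
  classical
  -- the family of c+1 vectors in Iomega ω
  set w : Fin (c + 1) → Iomega ω :=
    Fin.cons ⟨(k, l), hv⟩ (fun j => ⟨(p j, q j), hmem j⟩) with hw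
  have hfin : Module.Finite ℤ (Iomega ω) := by infer_instance
  have hnotind : ¬ LinearIndependent ℤ w := by
    intro h
    have := h.fintype_card_le_finrank
    rw [hc, Fintype.card_fin] at this
    omega
  obtain ⟨g, hg0, i0, hi0⟩ := Fintype.not_linearIndependent_iff.mp hnotind
  -- push the relation to the ambient module
  have hg0' : ∑ i, g i • ((w i : ((Fin d → ℤ) × ℤ))) = 0 := by
    have := congrArg ((Iomega ω).subtype) hg0
    simpa [map_sum] using this
  rw [Fin.sum_univ_succ] at hg0'
  simp only [hw, Fin.cons_zero, Fin.cons_succ] at hg0'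
  -- the head coefficient is nonzero
  have hn : g 0 ≠ 0 := by
    intro h0
    rw [h0, zero_smul, zero_add] at hg0'
    have : ∀ j : Fin c, g j.succ = 0 := Fintype.linearIndependent_iff.mp hind _ hg0'
    rcases Fin.eq_zero_or_eq_succ i0 with h | ⟨j, rfl⟩
    · exact hi0 (h ▸ h0)
    · exact hi0 (this j)
  -- n • (k,l) lies in the span of the (p j, q j)
  set Sp : Submodule ℤ ((Fin d → ℤ) × ℤ) :=
    Submodule.span ℤ (Set.range fun j => ((p j, q j) : (Fin d → ℤ) × ℤ)) with hSp
  have hmemSp : g 0 • ((k, l) : (Fin d → ℤ) × ℤ) ∈ Sp := by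
    have : g 0 • ((k, l) : (Fin d → ℤ) × ℤ)
        = - ∑ j : Fin c, g j.succ • ((p j, q j) : (Fin d → ℤ) × ℤ) := by
      have := hg0'
      linear_combination (norm := abel) this
    rw [this]
    exact neg_mem (Submodule.sum_mem _ fun j _ =>
      Submodule.smul_mem _ _ (Submodule.subset_span ⟨j, rfl⟩))
  -- the span consists of periods of x
  have hSle : Sp ≤ (perSubgroup x).toIntSubmodule := by
    rw [hSp, Submodule.span_le]
    rintro v ⟨j, rfl⟩
    exact hper j
  -- hence |g 0| • (k,l) is a period
  set n : ℕ := (g 0).natAbs with hn'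
  have hn1 : 1 ≤ n := by
    have := Int.natAbs_pos.mpr hn
    omega
  have hper' : tau ((n : ℤ) • k) ((n : ℤ) * l) x = x := by
    have h1 : ((n : ℤ)) • ((k, l) : (Fin d → ℤ) × ℤ) ∈ (perSubgroup x).toIntSubmodule := by
      rcases le_or_gt 0 (g 0) with h | h
      · have e : ((n : ℤ)) = g 0 := by omega
        rw [e]; exact hSle hmemSp
      · have e : ((n : ℤ)) = -(g 0) := by omega
        rw [e, neg_smul]
        exact neg_mem (hSle hmemSp)
    have := h1
    exact this
  -- iterate monotonicity
  have key : ∀ (hx : x ≤ tau k l x) (m : ℕ),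
      tau k l x ≤ tau (((m + 1 : ℕ) : ℤ) • k) (((m + 1 : ℕ) : ℤ) * l) x := by
    intro hx m
    induction m with
    | zero => simp [one_smul]
    | succ m ih =>
      have hstep : tau (((m + 2 : ℕ) : ℤ) • k) (((m + 2 : ℕ) : ℤ) * l) x
          = tau k l (tau (((m + 1 : ℕ) : ℤ) • k) (((m + 1 : ℕ) : ℤ) * l) x) := by
        have := tau_add' ((k, l) : (Fin d → ℤ) × ℤ)
          ((((m + 1 : ℕ) : ℤ) • k, ((m + 1 : ℕ) : ℤ) * l)) x
        simp only at this
        have e1 : ((m + 2 : ℕ) : ℤ) • k = k + ((m + 1 : ℕ) : ℤ) • k := by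
          push_cast; module
        have e2 : ((m + 2 : ℕ) : ℤ) * l = l + ((m + 1 : ℕ) : ℤ) * l := by
          push_cast; ring
        rw [e1, e2]; exact this
      calc tau k l x ≤ tau k l (tau (((m + 1 : ℕ) : ℤ) • k) (((m + 1 : ℕ) : ℤ) * l) x) := by
            refine tau_mono _ _ (le_trans hx ih)
        _ = _ := hstep.symm
  -- also symmetric version
  have key' : ∀ (hx : tau k l x ≤ x) (m : ℕ),
      tau (((m + 1 : ℕ) : ℤ) • k) (((m + 1 : ℕ) : ℤ) * l) x ≤ tau k l x := by
    intro hx m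
    induction m with
    | zero => simp [one_smul]
    | succ m ih =>
      have hstep : tau (((m + 2 : ℕ) : ℤ) • k) (((m + 2 : ℕ) : ℤ) * l) x
          = tau k l (tau (((m + 1 : ℕ) : ℤ) • k) (((m + 1 : ℕ) : ℤ) * l) x) := by
        have := tau_add' ((k, l) : (Fin d → ℤ) × ℤ)
          ((((m + 1 : ℕ) : ℤ) • k, ((m + 1 : ℕ) : ℤ) * l)) x
        simp only at this
        have e1 : ((m + 2 : ℕ) : ℤ) • k = k + ((m + 1 : ℕ) : ℤ) • k := by
          push_cast; module
        have e2 : ((m + 2 : ℕ) : ℤ) * l = l + ((m + 1 : ℕ) : ℤ) * l := by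
          push_cast; ring
        rw [e1, e2]; exact this
      calc tau (((m + 2 : ℕ) : ℤ) • k) (((m + 2 : ℕ) : ℤ) * l) x
          = tau k l (tau (((m + 1 : ℕ) : ℤ) • k) (((m + 1 : ℕ) : ℤ) * l) x) := hstep
        _ ≤ tau k l (tau k l x) := tau_mono _ _ ih
        _ ≤ _ := tau_mono _ _ hx
  obtain ⟨m, hm⟩ : ∃ m, n = m + 1 := ⟨n - 1, by omega⟩
  rw [hm] at hper'
  rcases hB k l with h | h
  · exact le_antisymm h (hper'.symm.trans_le (key' h m))
  · exact le_antisymm ((key h m).trans hper'.le) h
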